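/- For all n, d ≥ 1 with n even and n < 2^d, there is no full solution to the (n,d)-queens problem, i.e. |Q_max(n,d)| < n^(d-1). -/

import Mathlib

/-- A square `q` lies on the `(n,d)`-board: all coordinates between `1` and `n`. -/
def onBoard (n d : ℕ) (q : Fin d → ℤ) : Prop := ∀ i, 1 ≤ q i ∧ q i ≤ (n : ℤ)

/-- Queen `q1` attacks queen `q2`: there are `m : ℤ` and a nonzero `ε ∈ {-1,0,1}^d`
with `q1 i = ε i * m + q2 i` for all `i`. -/
def attacks {d : ℕ} (q1 q2 : Fin d → ℤ) : Prop :=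
  ∃ (m : ℤ) (ε : Fin d → ℤ), (∀ i, ε i = -1 ∨ ε i = 0 ∨ ε i = 1) ∧ ε ≠ 0 ∧
    ∀ i, q1 i = ε i * m + q2 i

/-- A set of queens is mutually non-attacking. -/
def nonAttacking {d : ℕ} (Q : Set (Fin d → ℤ)) : Prop :=
  ∀ q1 ∈ Q, ∀ q2 ∈ Q, q1 ≠ q2 → ¬ attacks q1 q2

/-- `maxQueens n d = |Q_max(n,d)|`, the maximum cardinality of a set of
mutually non-attacking queens on the `(n,d)`-board. -/
noncomputable def maxQueens (n d : ℕ) : ℕ :=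
  sSup {k | ∃ Q : Finset (Fin d → ℤ), Q.card = k ∧ (∀ q ∈ Q, onBoard n d q) ∧
    nonAttacking (Q : Set (Fin d → ℤ))}

/-- auxiliary -/
lemma card_le_aux (n d K : ℕ) (hK : n = 2 * K) (Q : Finset (Fin d → ℤ))
    (hb : ∀ q ∈ Q, onBoard n d q) (hna : nonAttacking (Q : Set (Fin d → ℤ))) :
    Q.card ≤ K ^ d := by
  classical
  set f : (Fin d → ℤ) → (Fin d → ℤ) := fun q i => (q i + 1) / 2 with hf
  have hinj : Set.InjOn f Q := by
    intro q1 h1 q2 h2 hfe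
    by_contra hne
    apply hna q1 h1 q2 h2 hne
    refine ⟨1, fun i => q1 i - q2 i, ?_, ?_, ?_⟩
    · intro i
      have h := congrFun hfe i
      have hb1 := hb q1 h1 i
      have hb2 := hb q2 h2 i
      simp only [hf] at h
      show q1 i - q2 i = -1 ∨ q1 i - q2 i = 0 ∨ q1 i - q2 i = 1
      omega
    · intro h0
      apply hne
      funext i
      have := congrFun h0 i
      simp only [Pi.zero_apply] at this
      linarith
    · intro i; show q1 i = (q1 i - q2 i) * 1 + q2 i; ring
  calc Q.card = (Q.image f).card := (Finset.card_image_of_injOn hinj).symm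
    _ ≤ (Fintype.piFinset fun _ : Fin d => Finset.Icc (1:ℤ) K).card := by
        apply Finset.card_le_card
        intro x hx
        obtain ⟨q, hq, rfl⟩ := Finset.mem_image.mp hx
        rw [Fintype.mem_piFinset]
        intro i
        have h1 := hb q hq i
        have h2 : (n : ℤ) = 2 * K := by exact_mod_cast congrArg (Nat.cast : ℕ → ℤ) hK
        simp only [hf, Finset.mem_Icc]
        omega
    _ = K ^ d := by
        rw [Fintype.card_piFinset]
        simp [Int.card_Icc]


/-- if `n` is even and `n < 2^d`, there is no full solution. -/
theorem no_full_solution_of_even (n d : ℕ) (hn : 1 ≤ n) (hd : 1 ≤ d)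
    (heven : Even n) (hlt : n < 2 ^ d) :
    maxQueens n d < n ^ (d - 1) := by
  obtain ⟨K, hK⟩ := heven
  have hK2 : n = 2 * K := by omega
  have hbound : K ^ d < n ^ (d - 1) := by
    have h1 : 2 ^ d * K ^ d = n ^ d := by rw [hK2, mul_pow]
    have h2 : n ^ d = n * n ^ (d - 1) := by
      conv_lhs => rw [show d = (d - 1) + 1 by omega]
      ring
    have h3 : n * n ^ (d - 1) < 2 ^ d * n ^ (d - 1) :=
      Nat.mul_lt_mul_of_lt_of_le hlt le_rfl (Nat.pow_pos hn)
    have := h1.trans_lt (h2 ▸ h3)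
    exact Nat.lt_of_mul_lt_mul_left this
  have hsup : maxQueens n d ≤ K ^ d := by
    apply csSup_le
    · exact ⟨0, ∅, by simp, by simp [onBoard], by intro q hq; simp at hq⟩
    · rintro k ⟨Q, rfl, hb, hna⟩
      exact card_le_aux n d K hK2 Q hb hna
  exact lt_of_le_of_lt hsup hbound
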